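/- arXiv:1405.5686 — 2 statements merged into one kernel-verified Lean document; each statement's English description precedes it below -/
import Mathlib

section
/- Let (X, μ) be a measure space, 1 ≤ p₀ < p ≤ p₁ ≤ ∞ with 1/p = (1−θ)/p₀ + θ/p₁ for some θ ∈ (0,1), and put 1/p_ε = 1/p + ε(1/p₁ − 1/p₀) for a real ε with 0 < θ + ε < 1. For f ∈ L^p(μ) with f ≠ 0, define R_ε f = (|f| / ‖f‖_p)^{εp(1/p₁ − 1/p₀)} · f (pointwise, with value 0 where f = 0). Then R_ε f ∈ L^{p_ε}(μ) and ‖R_ε f‖_{L^{p_ε}} = ‖f‖_{L^p}. -/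
open MeasureTheory ENNReal

theorem stmt_3 {X : Type*} [MeasurableSpace X] (μ : Measure X)
    (p₀ p p₁ θ ε pε : ℝ)
    (hp₀ : 1 ≤ p₀) (hp₀p : p₀ < p) (hpp₁ : p ≤ p₁)
    (hθ : θ ∈ Set.Ioo (0:ℝ) 1)
    (hp : 1 / p = (1 - θ) / p₀ + θ / p₁)
    (hθε : 0 < θ + ε) (hθε' : θ + ε < 1)
    (hpε : 1 / pε = 1 / p + ε * (1 / p₁ - 1 / p₀))
    (f : X → ℂ) (hf : MemLp f (ENNReal.ofReal p) μ)
    (hf0 : eLpNorm f (ENNReal.ofReal p) μ ≠ 0) :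
    MemLp (fun x => ((‖f x‖ / (eLpNorm f (ENNReal.ofReal p) μ).toReal) ^
        (ε * p * (1 / p₁ - 1 / p₀)) : ℝ) • f x) (ENNReal.ofReal pε) μ ∧
    eLpNorm (fun x => ((‖f x‖ / (eLpNorm f (ENNReal.ofReal p) μ).toReal) ^
        (ε * p * (1 / p₁ - 1 / p₀)) : ℝ) • f x) (ENNReal.ofReal pε) μ
      = eLpNorm f (ENNReal.ofReal p) μ := by
  obtain ⟨hθ0, hθ1⟩ := hθ
  have hp0 : (0:ℝ) < p₀ := lt_of_lt_of_le one_pos hp₀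
  have hpp : (0:ℝ) < p := lt_trans hp0 hp₀p
  have hp1 : (0:ℝ) < p₁ := lt_of_lt_of_le hpp hpp₁
  have hpε_inv : 1 / pε = (1 - (θ + ε)) / p₀ + (θ + ε) / p₁ := by
    rw [hpε, hp]; ring
  have hpεinv_pos : 0 < 1 / pε := by
    rw [hpε_inv]
    have h1 : 0 < (1 - (θ + ε)) / p₀ := div_pos (by linarith) hp0
    have h2 : 0 < (θ + ε) / p₁ := div_pos hθε hp1
    linarith
  have hpε_pos : 0 < pε := by
    by_contra h
    push_neg at h
    rcases lt_or_eq_of_le h with h | h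
    · have := one_div_neg.mpr h; linarith
    · rw [h] at hpεinv_pos; simp at hpεinv_pos
  set α : ℝ := ε * p * (1 / p₁ - 1 / p₀) with hαdef
  have hpne : p ≠ 0 := ne_of_gt hpp
  have hpεne : pε ≠ 0 := ne_of_gt hpε_pos
  have hkey : (1 + α) * pε = p := by
    have h1 : 1 / pε = (1 + α) / p := by
      rw [hpε, hαdef]; field_simp
    field_simp at h1
    linarith
  set c : ℝ := (eLpNorm f (ENNReal.ofReal p) μ).toReal with hcdef
  have hc : 0 < c := ENNReal.toReal_pos hf0 hf.2.ne
  have hqp : (ENNReal.ofReal p).toReal = p := ENNReal.toReal_ofReal hpp.le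
  have hqε : (ENNReal.ofReal pε).toReal = pε := ENNReal.toReal_ofReal hpε_pos.le
  have hqp0 : ENNReal.ofReal p ≠ 0 := by simpa [ENNReal.ofReal_eq_zero, not_le] using hpp
  have hqε0 : ENNReal.ofReal pε ≠ 0 := by simpa [ENNReal.ofReal_eq_zero, not_le] using hpε_pos
  set g : X → ℂ := fun x => ((‖f x‖ / c) ^ α : ℝ) • f x with hgdef
  -- measurability
  have hgmeas : AEStronglyMeasurable g μ := by
    have h1 : AEMeasurable (fun x => (‖f x‖ / c) ^ α) μ :=
      ((hf.1.norm.aemeasurable.div_const c).pow_const α)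
    exact h1.aestronglyMeasurable.smul hf.1
  -- pointwise identity
  have hpoint : ∀ x, (‖g x‖₊ : ℝ≥0∞) ^ pε
      = ENNReal.ofReal (c ^ (-(α * pε))) * (‖f x‖₊ : ℝ≥0∞) ^ p := by
    intro x
    have hgx : ‖g x‖ = (‖f x‖ / c) ^ α * ‖f x‖ := by
      rw [hgdef]
      simp only [norm_smul, Real.norm_eq_abs]
      rw [abs_of_nonneg (Real.rpow_nonneg (div_nonneg (norm_nonneg _) hc.le) _)]
    have hreal : ((‖f x‖ / c) ^ α * ‖f x‖) ^ pε = c ^ (-(α * pε)) * ‖f x‖ ^ p := by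
      rcases eq_or_lt_of_le (norm_nonneg (f x)) with ht | ht
      · rw [← ht]
        rw [Real.zero_rpow hpne, mul_zero, mul_zero, Real.zero_rpow hpεne]
      · have h1 : (‖f x‖ / c) ^ α * ‖f x‖ = ‖f x‖ ^ (α + 1) * c ^ (-α) := by
          rw [Real.div_rpow (norm_nonneg _) hc.le, Real.rpow_add ht, Real.rpow_one,
            Real.rpow_neg hc.le]
          ring
        rw [h1, Real.mul_rpow (Real.rpow_nonneg (norm_nonneg _) _)
            (Real.rpow_nonneg hc.le _)]
        rw [← Real.rpow_mul (norm_nonneg _), ← Real.rpow_mul hc.le]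
        have h2 : (α + 1) * pε = p := by linarith [hkey]
        have h3 : -α * pε = -(α * pε) := by ring
        rw [h2, h3]
        exact mul_comm _ _
    calc (‖g x‖₊ : ℝ≥0∞) ^ pε = ENNReal.ofReal (‖g x‖ ^ pε) := by
          rw [← ENNReal.ofReal_rpow_of_nonneg (norm_nonneg _) hpε_pos.le,
            ofReal_norm, enorm_eq_nnnorm]
      _ = ENNReal.ofReal (c ^ (-(α * pε)) * ‖f x‖ ^ p) := by rw [hgx, hreal]
      _ = ENNReal.ofReal (c ^ (-(α * pε))) * ENNReal.ofReal (‖f x‖ ^ p) := by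
          rw [ENNReal.ofReal_mul (Real.rpow_nonneg hc.le _)]
      _ = ENNReal.ofReal (c ^ (-(α * pε))) * (‖f x‖₊ : ℝ≥0∞) ^ p := by
          rw [← ENNReal.ofReal_rpow_of_nonneg (norm_nonneg _) hpp.le,
            ofReal_norm, enorm_eq_nnnorm]
  -- integral computation
  have hInt : ∫⁻ x, (‖f x‖₊ : ℝ≥0∞) ^ p ∂μ = ENNReal.ofReal (c ^ p) := by
    have h1 : eLpNorm f (ENNReal.ofReal p) μ
        = (∫⁻ x, (‖f x‖₊ : ℝ≥0∞) ^ p ∂μ) ^ (1 / p) := by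
      rw [eLpNorm_eq_lintegral_rpow_enorm_toReal hqp0 ENNReal.ofReal_ne_top, hqp]; simp only [enorm_eq_nnnorm]
    have h2 : eLpNorm f (ENNReal.ofReal p) μ = ENNReal.ofReal c := by
      rw [hcdef, ENNReal.ofReal_toReal hf.2.ne]
    have h3 : (∫⁻ x, (‖f x‖₊ : ℝ≥0∞) ^ p ∂μ) = (eLpNorm f (ENNReal.ofReal p) μ) ^ p := by
      rw [h1, ← ENNReal.rpow_mul, one_div, inv_mul_cancel₀ hpne, ENNReal.rpow_one]
    rw [h3, h2, ← ENNReal.ofReal_rpow_of_pos hc]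
  have hIg : ∫⁻ x, (‖g x‖₊ : ℝ≥0∞) ^ pε ∂μ = ENNReal.ofReal (c ^ pε) := by
    calc ∫⁻ x, (‖g x‖₊ : ℝ≥0∞) ^ pε ∂μ
        = ∫⁻ x, ENNReal.ofReal (c ^ (-(α * pε))) * (‖f x‖₊ : ℝ≥0∞) ^ p ∂μ := by
          simp_rw [hpoint]
      _ = ENNReal.ofReal (c ^ (-(α * pε))) * ∫⁻ x, (‖f x‖₊ : ℝ≥0∞) ^ p ∂μ :=
          lintegral_const_mul' _ _ ENNReal.ofReal_ne_top
      _ = ENNReal.ofReal (c ^ (-(α * pε))) * ENNReal.ofReal (c ^ p) := by rw [hInt]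
      _ = ENNReal.ofReal (c ^ (-(α * pε)) * c ^ p) := by
          rw [ENNReal.ofReal_mul (Real.rpow_nonneg hc.le _)]
      _ = ENNReal.ofReal (c ^ pε) := by
          rw [← Real.rpow_add hc, show -(α * pε) + p = pε by linarith [hkey]]
  have hgnorm : eLpNorm g (ENNReal.ofReal pε) μ = eLpNorm f (ENNReal.ofReal p) μ := by
    rw [eLpNorm_eq_lintegral_rpow_enorm_toReal hqε0 ENNReal.ofReal_ne_top, hqε]
    simp only [enorm_eq_nnnorm]
    rw [hIg,
      ENNReal.ofReal_rpow_of_pos (Real.rpow_pos_of_pos hc _)]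
    rw [← Real.rpow_mul hc.le, mul_one_div, div_self hpεne, Real.rpow_one,
      hcdef, ENNReal.ofReal_toReal hf.2.ne]
  exact ⟨⟨hgmeas, by rw [hgnorm]; exact hf.2⟩, hgnorm⟩
end

section
/- Let S = {z ∈ ℂ : 0 < Re z < 1}, let t ∈ (0,1), and let h : closure(S) → ℂ be continuous, bounded by M on closure(S), holomorphic on S, with h(t) = 0. Then for every z ∈ closure(S), |h(z)| ≤ (M / min(t, 1−t)) · |z − t|. In particular, for real ε with 0 < t + ε < 1 one has |h(t+ε)| ≤ (M / min(t, 1−t)) · |ε|. -/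
open Set Complex Topology Filter Metric

theorem stmt_15 (t : ℝ) (ht : t ∈ Set.Ioo (0:ℝ) 1) (M : ℝ) (h : ℂ → ℂ)
    (hc : ContinuousOn h (closure {z : ℂ | 0 < z.re ∧ z.re < 1}))
    (hbd : ∀ z ∈ closure {z : ℂ | 0 < z.re ∧ z.re < 1}, ‖h z‖ ≤ M)
    (hd : DifferentiableOn ℂ h {z : ℂ | 0 < z.re ∧ z.re < 1})
    (ht0 : h (t : ℂ) = 0) :
    (∀ z ∈ closure {z : ℂ | 0 < z.re ∧ z.re < 1},
      ‖h z‖ ≤ (M / min t (1 - t)) * ‖z - t‖) ∧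
    (∀ ε : ℝ, 0 < t + ε → t + ε < 1 →
      ‖h ((t : ℂ) + ε)‖ ≤ (M / min t (1 - t)) * |ε|) := by
  obtain ⟨ht0', ht1⟩ := ht
  set S : Set ℂ := {z : ℂ | 0 < z.re ∧ z.re < 1} with hS
  have hSeq : S = Complex.re ⁻¹' Set.Ioo 0 1 := rfl
  have hSopen : IsOpen S := by
    rw [hSeq]; exact isOpen_Ioo.preimage continuous_re
  have hclS : closure S = Complex.re ⁻¹' Set.Icc 0 1 := by
    rw [hSeq, Complex.closure_preimage_re, closure_Ioo (by norm_num : (0:ℝ) ≠ 1)]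
  set r : ℝ := min t (1 - t) with hr
  have hrpos : 0 < r := lt_min ht0' (by linarith)
  have hrt : r ≤ t := min_le_left _ _
  have hrt1 : r ≤ 1 - t := min_le_right _ _
  have htS : (t : ℂ) ∈ S := by
    simp [hS, Complex.ofReal_re, ht0', ht1]
  have htclS : closure S ∈ 𝓝 (t : ℂ) :=
    Filter.mem_of_superset (hSopen.mem_nhds htS) subset_closure
  have hM : 0 ≤ M := by
    have := hbd (t : ℂ) (subset_closure htS)
    rwa [ht0, norm_zero] at this
  set g : ℂ → ℂ := dslope h (t : ℂ) with hg
  -- g is differentiable on S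
  have hgd : DifferentiableOn ℂ g S :=
    (Complex.differentiableOn_dslope (hSopen.mem_nhds htS)).2 hd
  -- g is continuous on closure S
  have hgc : ContinuousOn g (closure S) :=
    (continuousOn_dslope htclS).2 ⟨hc, hd.differentiableAt (hSopen.mem_nhds htS)⟩
  set C : ℝ := M / r with hC
  have hCnn : 0 ≤ C := div_nonneg hM hrpos.le
  -- norm formula for g away from t
  have hgval : ∀ z : ℂ, z ≠ (t : ℂ) → ‖g z‖ = ‖h z‖ / ‖z - (t : ℂ)‖ := by
    intro z hz
    rw [hg, dslope_of_ne _ hz, slope_def_module, ht0, sub_zero, norm_smul,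
      norm_inv, div_eq_inv_mul]
  -- bound for g when the distance to t is at least s
  have hgbd : ∀ z : ℂ, z ∈ closure S → r ≤ ‖z - (t : ℂ)‖ → ‖g z‖ ≤ C := by
    intro z hzS hzd
    have hzne : z ≠ (t : ℂ) := by
      intro hzz; rw [hzz, sub_self, norm_zero] at hzd; exact absurd hzd (not_le.2 hrpos)
    rw [hgval z hzne]
    exact div_le_div₀ hM (hbd z hzS) hrpos hzd
  -- closedBall t r is contained in closure S
  have hball : Metric.closedBall (t : ℂ) r ⊆ closure S := by
    intro z hz
    rw [Metric.mem_closedBall, Complex.dist_eq] at hz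
    have h1 : |(z - (t : ℂ)).re| ≤ ‖z - (t : ℂ)‖ := Complex.abs_re_le_norm _
    rw [Complex.sub_re, Complex.ofReal_re] at h1
    rw [hclS]
    constructor
    · have := neg_abs_le (z.re - t); nlinarith [abs_nonneg (z.re - t)]
    · have := le_abs_self (z.re - t); nlinarith
  have hballS : Metric.ball (t : ℂ) r ⊆ S := by
    intro z hz
    rw [Metric.mem_ball, Complex.dist_eq] at hz
    have h1 : |(z - (t : ℂ)).re| ≤ ‖z - (t : ℂ)‖ := Complex.abs_re_le_norm _
    rw [Complex.sub_re, Complex.ofReal_re] at h1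
    constructor
    · have := neg_abs_le (z.re - t); nlinarith [abs_nonneg (z.re - t)]
    · have := le_abs_self (z.re - t); nlinarith
  -- g is bounded by C on closure S of the strip minus nothing, via max modulus on the ball
  have hgball : ∀ z ∈ Metric.closedBall (t : ℂ) r, ‖g z‖ ≤ C := by
    intro z hz
    have hdc : DiffContOnCl ℂ g (Metric.ball (t : ℂ) r) := by
      refine ⟨hgd.mono hballS, hgc.mono ?_⟩
      rw [closure_ball (t : ℂ) hrpos.ne']
      exact hball
    refine Complex.norm_le_of_forall_mem_frontier_norm_le Metric.isBounded_ball hdc ?_ ?_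
    · intro w hw
      rw [frontier_ball (t : ℂ) hrpos.ne'] at hw
      rw [mem_sphere_iff_norm] at hw
      exact hgbd w (hball (by rw [Metric.mem_closedBall, Complex.dist_eq]; exact le_of_eq hw))
        hw.ge
    · rwa [closure_ball (t : ℂ) hrpos.ne']
  have hgbd' : ∀ z ∈ closure S, ‖g z‖ ≤ C := by
    intro z hz
    rcases le_or_gt r ‖z - (t : ℂ)‖ with h1 | h1
    · exact hgbd z hz h1
    · exact hgball z (by rw [Metric.mem_closedBall, Complex.dist_eq]; exact h1.le)
  -- Phragmén–Lindelöf
  have hPL : ∀ z ∈ closure S, ‖g z‖ ≤ C := by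
    intro z hz
    rw [hclS] at hz
    refine PhragmenLindelof.vertical_strip (a := 0) (b := 1)
      ⟨hgd, by rwa [← hSeq]⟩ ?_ ?_ ?_ hz.1 hz.2
    · refine ⟨0, by simpa using Real.pi_pos, 0, ?_⟩
      rw [Asymptotics.isBigO_iff]
      refine ⟨C, Filter.eventually_inf_principal.2 (Filter.Eventually.of_forall fun z hz => ?_)⟩
      simp only [zero_mul, Real.exp_zero, mul_one, norm_one]
      exact hgbd' z (subset_closure (by rwa [hSeq]))
    · intro z hz
      refine hgbd z (by rw [hclS]; simp [hz]) ?_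
      have h1 : |(z - (t : ℂ)).re| ≤ ‖z - (t : ℂ)‖ := Complex.abs_re_le_norm _
      rw [Complex.sub_re, Complex.ofReal_re, hz] at h1
      calc r ≤ t := hrt
        _ ≤ |0 - t| := by rw [abs_sub_comm, sub_zero]; exact le_abs_self t
        _ ≤ _ := h1
    · intro z hz
      refine hgbd z (by rw [hclS]; simp [hz]) ?_
      have h1 : |(z - (t : ℂ)).re| ≤ ‖z - (t : ℂ)‖ := Complex.abs_re_le_norm _
      rw [Complex.sub_re, Complex.ofReal_re, hz] at h1
      calc r ≤ 1 - t := hrt1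
        _ ≤ |1 - t| := le_abs_self _
        _ ≤ _ := h1
  have main : ∀ z ∈ closure S, ‖h z‖ ≤ C * ‖z - (t : ℂ)‖ := by
    intro z hz
    have key : h z = (z - (t : ℂ)) • g z := by
      rw [hg, sub_smul_dslope, ht0, sub_zero]
    calc ‖h z‖ = ‖(z - (t : ℂ)) • g z‖ := by rw [← key]
      _ = ‖z - (t : ℂ)‖ * ‖g z‖ := norm_smul _ _
      _ ≤ ‖z - (t : ℂ)‖ * C := by
          exact mul_le_mul_of_nonneg_left (hPL z hz) (norm_nonneg _)
      _ = C * ‖z - (t : ℂ)‖ := mul_comm _ _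
  refine ⟨main, fun ε hε0 hε1 => ?_⟩
  have hmem : ((t : ℂ) + (ε : ℂ)) ∈ closure S := by
    rw [hclS]
    simp only [Set.mem_preimage, Complex.add_re, Complex.ofReal_re, Set.mem_Icc]
    constructor <;> linarith
  have := main _ hmem
  rwa [add_sub_cancel_left, Complex.norm_real, Real.norm_eq_abs] at this
end
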